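/- For any continuous linear operator T on a topological vector space X and any n ∈ ℕ, the chain recurrent sets of T and T^n coincide: CR(T^n) = CR(T). Consequently T is chain recurrent if and only if T^n is chain recurrent for some (equivalently, every) n ∈ ℕ. -/

import Mathlib

/-- A V-chain of length k for a map T from x to y. -/
def IsVChain {X : Type*} [AddCommGroup X] (T : X → X) (V : Set X) (x y : X) (k : ℕ) : Prop :=
  ∃ c : ℕ → X, c 0 = x ∧ c k = y ∧ ∀ j < k, T (c j) - c (j + 1) ∈ V

/-- The chain recurrent set of a map on a topological vector space. -/
def CRSet (𝕜 : Type*) {X : Type*} [NontriviallyNormedField 𝕜] [AddCommGroup X] [Module 𝕜 X]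
    [TopologicalSpace X] (T : X → X) : Set X :=
  {x | ∀ V ∈ nhds (0 : X), Balanced 𝕜 V → ∃ k : ℕ, 1 ≤ k ∧ IsVChain T V x x k}

section Aux

variable {𝕜 X : Type*} [NontriviallyNormedField 𝕜] [AddCommGroup X] [Module 𝕜 X]
    [TopologicalSpace X] [IsTopologicalAddGroup X] [ContinuousSMul 𝕜 X]

lemma isVChain_trans {T : X → X} {V : Set X} {x y z : X} {k l : ℕ}
    (h1 : IsVChain T V x y k) (h2 : IsVChain T V y z l) :
    IsVChain T V x z (k + l) := by
  obtain ⟨c, hc0, hck, hc⟩ := h1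
  obtain ⟨d, hd0, hdl, hd⟩ := h2
  refine ⟨fun j => if j < k then c j else d (j - k), ?_, ?_, ?_⟩
  · by_cases hk : 0 < k
    · simp [hk, hc0]
    · have hk0 : k = 0 := by omega
      subst hk0
      simp only [lt_irrefl, if_false, Nat.sub_zero, hd0]
      rw [← hck, hc0]
  · have : ¬ (k + l < k) := by omega
    simp [this, Nat.add_sub_cancel_left, hdl]
  · intro j hj
    by_cases h1 : j + 1 < k
    · have hjk : j < k := by omega
      simp only [hjk, h1, if_true]
      exact hc j hjk
    · by_cases h2 : j < k
      · have hjk1 : j + 1 = k := by omega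
        simp only [h2, if_true, h1, if_false]
        have : d (j + 1 - k) = c k := by rw [hjk1]; simp [hd0, hck]
        rw [this, ← hjk1]
        exact hc j h2
      · simp only [h2, if_false, h1, if_false]
        have hlt : j - k < l := by omega
        have : j + 1 - k = (j - k) + 1 := by omega
        rw [this]
        exact hd _ hlt

lemma isVChain_repeat {T : X → X} {V : Set X} {x : X} {k : ℕ}
    (h : IsVChain T V x x k) : ∀ r : ℕ, IsVChain T V x x (r * k)
  | 0 => ⟨fun _ => x, rfl, rfl, fun j hj => absurd hj (by omega)⟩
  | r + 1 => by
    have := isVChain_trans (isVChain_repeat h r) h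
    rwa [Nat.succ_mul]

lemma mem_CR_of_mem_CR_pow {T : X →L[𝕜] X} {n : ℕ} (hn : 0 < n) {x : X}
    (hx : x ∈ CRSet 𝕜 (⇑(T ^ n))) : x ∈ CRSet 𝕜 (⇑T) := by
  intro V hV hVb
  obtain ⟨k, hk, c, hc0, hck, hc⟩ := hx V hV hVb
  refine ⟨n * k, Nat.mul_pos hn hk, fun j => (T ^ (j % n)) (c (j / n)), ?_, ?_, ?_⟩
  · simp [hc0]
  · simp [Nat.mul_mod_right, Nat.mul_div_cancel_left _ hn, hck]
  · intro j hj
    have hr : j % n < n := Nat.mod_lt _ hn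
    have hqr : n * (j / n) + j % n = j := Nat.div_add_mod j n
    have hcomm : n * (j / n) = (j / n) * n := Nat.mul_comm _ _
    show T ((T ^ (j % n)) (c (j / n))) - (T ^ ((j + 1) % n)) (c ((j + 1) / n)) ∈ V
    by_cases hcase : j % n + 1 < n
    · have hj1 : j + 1 = (j % n + 1) + (j / n) * n := by omega
      have hmod : (j + 1) % n = j % n + 1 := by
        rw [hj1, Nat.add_mul_mod_self_right, Nat.mod_eq_of_lt hcase]
      have hdiv : (j + 1) / n = j / n := by
        rw [hj1, Nat.add_mul_div_right _ _ hn, Nat.div_eq_of_lt hcase, Nat.zero_add]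
      rw [hmod, hdiv, pow_succ']
      simp only [ContinuousLinearMap.mul_apply, sub_self]
      exact mem_of_mem_nhds hV
    · have hlast : j % n + 1 = n := by omega
      have hsucc : n * (j / n + 1) = n * (j / n) + n := Nat.mul_succ _ _
      have hj1 : j + 1 = n * (j / n + 1) := by omega
      have hmod : (j + 1) % n = 0 := by rw [hj1]; exact Nat.mul_mod_right _ _
      have hdiv : (j + 1) / n = j / n + 1 := by
        rw [hj1]; exact Nat.mul_div_cancel_left _ hn
      have hqk : j / n < k := by
        refine (Nat.div_lt_iff_lt_mul hn).mpr ?_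
        have := Nat.mul_comm k n
        omega
      rw [hmod, hdiv, pow_zero]
      have hpow : ∀ y : X, T ((T ^ (j % n)) y) = (T ^ n) y := by
        intro y
        conv_rhs => rw [← hlast]
        rw [pow_succ']
        simp [ContinuousLinearMap.mul_apply]
      rw [hpow]
      simpa using hc _ hqk

lemma exists_nhd_chain (T : X →L[𝕜] X) (V : Set X) (hV : V ∈ nhds (0 : X)) (n : ℕ) :
    ∃ U ∈ nhds (0 : X), ∀ (c : ℕ → X) (L : ℕ), (∀ j < L, T (c j) - c (j + 1) ∈ U) →
      ∀ i, i + n ≤ L → (T ^ n) (c i) - c (i + n) ∈ V := by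
  induction n generalizing V with
  | zero =>
    exact ⟨V, hV, fun c L hc i hi => by simpa using mem_of_mem_nhds hV⟩
  | succ n ih =>
    obtain ⟨W, hW, hWadd⟩ := exists_nhds_zero_half hV
    have hTW : T ⁻¹' W ∈ nhds (0 : X) := by
      have h0 : ContinuousAt T 0 := T.continuous.continuousAt
      have := h0.preimage_mem_nhds (by rwa [map_zero] : W ∈ nhds (T 0))
      exact this
    obtain ⟨U, hU, hUc⟩ := ih (T ⁻¹' W) hTW
    refine ⟨U ∩ W, Filter.inter_mem hU hW, fun c L hc i hi => ?_⟩
    have h1 : T ((T ^ n) (c i) - c (i + n)) ∈ W :=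
      hUc c L (fun j hj => (hc j hj).1) i (by omega)
    have h2 : T (c (i + n)) - c (i + n + 1) ∈ W := (hc (i + n) (by omega)).2
    have key : (T ^ (n + 1)) (c i) - c (i + (n + 1)) =
        T ((T ^ n) (c i) - c (i + n)) + (T (c (i + n)) - c (i + n + 1)) := by
      rw [pow_succ']
      simp only [ContinuousLinearMap.mul_apply, map_sub]
      abel
    rw [key]
    exact hWadd _ h1 _ h2

lemma mem_CR_pow_of_mem_CR {T : X →L[𝕜] X} {n : ℕ} (hn : 0 < n) {x : X}
    (hx : x ∈ CRSet 𝕜 (⇑T)) : x ∈ CRSet 𝕜 (⇑(T ^ n)) := by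
  intro V hV hVb
  obtain ⟨U, hU, hUc⟩ := exists_nhd_chain T V hV n
  obtain ⟨W, ⟨hW, hWb⟩, hWU⟩ := (nhds_basis_balanced 𝕜 X).mem_iff.mp hU
  obtain ⟨k, hk, hchain⟩ := hx W hW hWb
  obtain ⟨c, hc0, hck, hc⟩ := isVChain_repeat hchain n
  refine ⟨k, hk, fun i => c (n * i), ?_, ?_, ?_⟩
  · simpa using hc0
  · exact hck
  · intro i hi
    have hsucc : n * (i + 1) = n * i + n := Nat.mul_succ _ _
    have hle : n * i + n ≤ n * k := by
      have : n * (i + 1) ≤ n * k := Nat.mul_le_mul_left n (by omega)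
      omega
    have := hUc c (n * k) (fun j hj => hWU (hc j hj)) (n * i) hle
    show (T ^ n) (c (n * i)) - c (n * (i + 1)) ∈ V
    rwa [hsucc]

end Aux

/-- CR(T^n) = CR(T) for every n ≥ 1; consequently T is chain recurrent iff some
(equivalently, every) power T^n is chain recurrent. -/
theorem stmt17 {𝕜 X : Type*} [NontriviallyNormedField 𝕜] [AddCommGroup X] [Module 𝕜 X]
    [TopologicalSpace X] [IsTopologicalAddGroup X] [ContinuousSMul 𝕜 X] (T : X →L[𝕜] X) :
    (∀ n : ℕ, 0 < n → CRSet 𝕜 (⇑(T ^ n)) = CRSet 𝕜 (⇑T)) ∧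
    ((CRSet 𝕜 (⇑T) = Set.univ) ↔ ∃ n : ℕ, 0 < n ∧ CRSet 𝕜 (⇑(T ^ n)) = Set.univ) ∧
    ((CRSet 𝕜 (⇑T) = Set.univ) ↔ ∀ n : ℕ, 0 < n → CRSet 𝕜 (⇑(T ^ n)) = Set.univ) := by
  have main : ∀ n : ℕ, 0 < n → CRSet 𝕜 (⇑(T ^ n)) = CRSet 𝕜 (⇑T) := fun n hn =>
    Set.ext fun x => ⟨fun h => mem_CR_of_mem_CR_pow hn h, fun h => mem_CR_pow_of_mem_CR hn h⟩
  refine ⟨main, ⟨?_, ?_⟩, ⟨?_, ?_⟩⟩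
  · intro h
    exact ⟨1, one_pos, by rwa [pow_one]⟩
  · rintro ⟨n, hn, h⟩
    rw [← main n hn]; exact h
  · intro h n hn
    rw [main n hn]; exact h
  · intro h
    have := h 1 one_pos
    rwa [pow_one] at this
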